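/- If a real Banach space X has property (𝒦), then for every real Banach space Y every compact operator u : Y → X admits a compact factorization through some quotient Q of X**: there are a Banach space Q, a bounded linear surjection from X** onto Q, and compact operators v : Q → X and w : Y → Q such that u = v ∘ w. -/

import Mathlib

set_option maxSynthPendingDepth 3

open Filter Topology Metric NormedSpace Function

/-- `u` is a finite-rank operator: its range is finite-dimensional. -/
def FinRankOp {X Y : Type*} [NormedAddCommGroup X] [NormedSpace ℝ X]
    [NormedAddCommGroup Y] [NormedSpace ℝ Y] (u : X →L[ℝ] Y) : Prop :=
  FiniteDimensional ℝ (LinearMap.range (u : X →ₗ[ℝ] Y))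

/-- `u` is approximable: a limit in operator norm of finite-rank operators. -/
def ApproxOp {X Y : Type*} [NormedAddCommGroup X] [NormedSpace ℝ X]
    [NormedAddCommGroup Y] [NormedSpace ℝ Y] (u : X →L[ℝ] Y) : Prop :=
  u ∈ closure {f : X →L[ℝ] Y | FinRankOp f}

/-- `u` is a compact operator: it maps the closed unit ball to a relatively compact set. -/
def CompactOp {X Y : Type*} [NormedAddCommGroup X] [NormedSpace ℝ X]
    [NormedAddCommGroup Y] [NormedSpace ℝ Y] (u : X →L[ℝ] Y) : Prop :=
  IsCompact (closure (u '' Metric.closedBall 0 1))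

/-- Property (𝒦): every compact subset is contained in the closure of the image of the
closed unit ball under some compact operator `X → X`. -/
def PropertyK (X : Type*) [NormedAddCommGroup X] [NormedSpace ℝ X] : Prop :=
  ∀ K : Set X, IsCompact K →
    ∃ v : X →L[ℝ] X, CompactOp v ∧ K ⊆ closure (v '' Metric.closedBall 0 1)

/-- Property (F̄): every compact subset is contained in the closure of the image of the
closed unit ball under some approximable operator `X → X`. -/
def PropertyF (X : Type*) [NormedAddCommGroup X] [NormedSpace ℝ X] : Prop :=
  ∀ K : Set X, IsCompact K →
    ∃ v : X →L[ℝ] X, ApproxOp v ∧ K ⊆ closure (v '' Metric.closedBall 0 1)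

set_option maxHeartbeats 1600000
set_option synthInstance.maxHeartbeats 400000

/-- Every continuous linear functional on the weak-* dual is an evaluation. -/
lemma weakDual_dual_repr {E : Type*} [NormedAddCommGroup E] [NormedSpace ℝ E]
    (F : WeakDual ℝ E →L[ℝ] ℝ) :
    ∃ g : E, ∀ ψ : WeakDual ℝ E, F ψ = ψ g := by
  classical
  set B : WeakDual ℝ E →ₗ[ℝ] E →ₗ[ℝ] ℝ := topDualPairing ℝ E with hB
  -- neighborhood basis of 0 given by seminorms
  have hbasis : (𝓝 (0 : WeakDual ℝ E)).HasBasis B.toSeminormFamily.basisSets _root_.id :=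
    LinearMap.hasBasis_weakBilin (topDualPairing ℝ E)
  have hcont : F ⁻¹' Metric.ball (0 : ℝ) 1 ∈ 𝓝 (0 : WeakDual ℝ E) := by
    have := F.continuous.tendsto (0 : WeakDual ℝ E)
    rw [map_zero] at this
    exact this (Metric.ball_mem_nhds _ one_pos)
  obtain ⟨U, hU, hUsub⟩ := hbasis.mem_iff.mp hcont
  obtain ⟨s, r, hr, rfl⟩ := B.toSeminormFamily.basisSets_iff.mp hU
  -- kernel inclusion
  have hker : (⨅ i : s, LinearMap.ker (B.flip (i : E))) ≤ LinearMap.ker (F : WeakDual ℝ E →ₗ[ℝ] ℝ) := by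
    intro ψ hψ
    simp only [Submodule.mem_iInf, LinearMap.mem_ker] at hψ ⊢
    have key : ∀ t : ℝ, 0 < t → |F ψ| < 1 / t := by
      intro t ht
      have hmem : (t • ψ : WeakDual ℝ E) ∈ (s.sup B.toSeminormFamily).ball 0 r := by
        rw [Seminorm.mem_ball_zero]
        apply Seminorm.finset_sup_apply_lt hr
        intro i hi
        have : B.toSeminormFamily i (t • ψ) = 0 := by
          simp only [LinearMap.toSeminormFamily_apply, map_smul]
          have : B (t • ψ) i = t * (B ψ i) := by
            simp [map_smul, smul_eq_mul]
          have hzero : B ψ i = 0 := hψ ⟨i, hi⟩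
          simp [this, hzero]
        rw [this]; exact hr
      have := hUsub hmem
      simp only [Set.mem_preimage, Metric.mem_ball, dist_zero_right, Real.norm_eq_abs,
        map_smul, smul_eq_mul] at this
      rw [abs_mul, abs_of_pos ht] at this
      rw [lt_div_iff₀ ht, mul_comm]
      exact this
    have : |F ψ| ≤ 0 := by
      by_contra h
      push_neg at h
      have := key (2 / |F ψ|) (by positivity)
      rw [one_div, inv_div] at this
      nlinarith [abs_nonneg (F ψ)]
    have := abs_nonneg (F ψ)
    have habs : |F ψ| = 0 := le_antisymm ‹|F ψ| ≤ 0› ‹0 ≤ |F ψ|›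
    exact abs_eq_zero.mp habs
  have hspan : (F : WeakDual ℝ E →ₗ[ℝ] ℝ) ∈
      Submodule.span ℝ (Set.range (fun i : s => B.flip (i : E))) :=
    mem_span_of_iInf_ker_le_ker hker
  obtain ⟨c, hc⟩ := (Finsupp.mem_span_range_iff_exists_finsupp).mp hspan
  refine ⟨c.sum fun i a => a • (i : E), fun ψ => ?_⟩
  have := LinearMap.congr_fun hc ψ
  simp only [Finsupp.sum, LinearMap.coe_sum, Finset.sum_apply, LinearMap.smul_apply] at this ⊢
  have h2 : ψ (∑ x ∈ c.support, c x • (x : E)) = ∑ x ∈ c.support, c x • (B.flip (x : E)) ψ := by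
    rw [map_sum]
    simp [LinearMap.flip_apply, hB, topDualPairing_apply, map_smul, smul_eq_mul]
    rfl
  exact (h2.trans this).symm

/-- Grothendieck-type decomposition: every element of a compact set in a Banach space is
the sum of a series with terms chosen from fixed finite sets of geometrically decaying norm. -/
lemma compact_decomposition {X : Type*} [NormedAddCommGroup X] [NormedSpace ℝ X]
    [CompleteSpace X] (K : Set X) (hK : IsCompact K) {M b : ℝ} (hM : 0 < M)
    (hb0 : 0 < b) (hb1 : b < 1) (hKM : K ⊆ Metric.closedBall 0 M) :
    ∃ G : ℕ → Finset X, (∀ n, ∀ g ∈ G n, ‖g‖ ≤ M * b ^ n) ∧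
      ∀ a ∈ K, ∃ dec : ℕ → X, (∀ n, dec n ∈ G n) ∧ HasSum dec a := by
  classical
  -- a finite net chooser
  have net_ex : ∀ s : Set X, IsCompact s → ∀ ε : ℝ, 0 < ε →
      ∃ t : Finset X, ↑t ⊆ s ∧ s ⊆ ⋃ y ∈ t, Metric.ball y ε := by
    intro s hs ε hε
    obtain ⟨t, ht⟩ := hs.elim_finite_subcover (fun a : s => Metric.ball (a : X) ε)
      (fun a => isOpen_ball) (fun x hx => Set.mem_iUnion.mpr ⟨⟨x, hx⟩, mem_ball_self hε⟩)
    refine ⟨t.image (fun a : s => (a : X)), ?_, ?_⟩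
    · intro x hx
      rw [Finset.coe_image] at hx
      obtain ⟨a, _, rfl⟩ := hx
      exact a.2
    · intro x hx
      have := ht hx
      simp only [Set.mem_iUnion] at this
      obtain ⟨a, ha, hxa⟩ := this
      exact Set.mem_biUnion (Finset.mem_image_of_mem (fun a : s => (a : X)) ha) hxa
  set net : ℕ → Set X → Finset X := fun n s =>
    if h : ∃ t : Finset X, ↑t ⊆ s ∧ s ⊆ ⋃ y ∈ t, Metric.ball y (M * b ^ (n + 1))
    then h.choose else ∅ with hnet
  set KK : ℕ → Set X := fun n => Nat.rec K (fun n s =>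
      (⋃ y ∈ net n s, (fun a => a - y) '' s) ∩ Metric.closedBall 0 (M * b ^ (n + 1))) n with hKK
  have hKK0 : KK 0 = K := rfl
  have hKKsucc : ∀ n, KK (n + 1) =
      (⋃ y ∈ net n (KK n), (fun a => a - y) '' (KK n)) ∩ Metric.closedBall 0 (M * b ^ (n + 1)) :=
    fun n => rfl
  -- invariant
  have hinv : ∀ n, IsCompact (KK n) ∧ KK n ⊆ Metric.closedBall 0 (M * b ^ n) := by
    intro n
    induction n with
    | zero => exact ⟨hK, by simpa [hKK0] using hKM⟩
    | succ n ih =>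
      rw [hKKsucc n]
      constructor
      · apply IsCompact.inter_right
        · apply (net n (KK n)).isCompact_biUnion
          intro y _
          exact ih.1.image (by fun_prop)
        · exact isClosed_closedBall
      · exact Set.inter_subset_right
  set G : ℕ → Finset X := fun n => net n (KK n) with hG
  have hnet_spec : ∀ n, ↑(G n) ⊆ KK n ∧ KK n ⊆ ⋃ y ∈ G n, Metric.ball y (M * b ^ (n + 1)) := by
    intro n
    have h : ∃ t : Finset X, ↑t ⊆ KK n ∧ KK n ⊆ ⋃ y ∈ t, Metric.ball y (M * b ^ (n + 1)) :=
      net_ex (KK n) (hinv n).1 _ (by positivity)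
    have heq : G n = h.choose := dif_pos h
    rw [heq]
    exact h.choose_spec
  have hGnorm : ∀ n, ∀ g ∈ G n, ‖g‖ ≤ M * b ^ n := by
    intro n g hg
    have := (hinv n).2 ((hnet_spec n).1 hg)
    simpa [Metric.mem_closedBall, dist_zero_right] using this
  refine ⟨G, hGnorm, ?_⟩
  intro a ha
  -- step: from any point of KK n subtract an element of G n to land in KK (n+1)
  have hstep : ∀ n, ∀ x ∈ KK n, ∃ y ∈ G n, x - y ∈ KK (n + 1) := by
    intro n x hx
    have := (hnet_spec n).2 hx
    simp only [Set.mem_iUnion] at this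
    obtain ⟨y, hy, hxy⟩ := this
    refine ⟨y, hy, ?_⟩
    rw [hKKsucc n]
    constructor
    · exact Set.mem_biUnion hy ⟨x, hx, rfl⟩
    · rw [Metric.mem_closedBall, dist_zero_right]
      rw [Metric.mem_ball] at hxy
      rw [← dist_eq_norm]
      exact hxy.le
  set pk : ℕ → X → X := fun n x =>
    if h : ∃ y ∈ G n, x - y ∈ KK (n + 1) then h.choose else 0 with hpk
  set res : ℕ → X := fun n => Nat.rec a (fun n x => x - pk n x) n with hres
  have hres0 : res 0 = a := rfl
  have hres_succ : ∀ n, res (n + 1) = res n - pk n (res n) := fun n => rfl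
  have hresKK : ∀ n, res n ∈ KK n := by
    intro n
    induction n with
    | zero => rw [hres0, hKK0]; exact ha
    | succ n ih =>
      rw [hres_succ n]
      have h : ∃ y ∈ G n, res n - y ∈ KK (n + 1) := hstep n _ ih
      have heq : pk n (res n) = h.choose := dif_pos h
      rw [heq]
      exact h.choose_spec.2
  set dec : ℕ → X := fun n => pk n (res n) with hdec
  have hdecG : ∀ n, dec n ∈ G n := by
    intro n
    have h : ∃ y ∈ G n, res n - y ∈ KK (n + 1) := hstep n _ (hresKK n)
    have heq : pk n (res n) = h.choose := dif_pos h
    show pk n (res n) ∈ G n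
    rw [heq]
    exact h.choose_spec.1
  refine ⟨dec, hdecG, ?_⟩
  have hsummable : Summable dec := by
    apply Summable.of_norm_bounded (g := fun n => M * b ^ n)
      (Summable.mul_left M (summable_geometric_of_lt_one hb0.le hb1))
    intro n
    exact hGnorm n _ (hdecG n)
  have hpartial : ∀ n, a - ∑ i ∈ Finset.range n, dec i = res n := by
    intro n
    induction n with
    | zero => simp [hres0]
    | succ n ih =>
      rw [Finset.sum_range_succ]
      have hr : res (n + 1) = res n - dec n := rfl
      rw [hr, ← ih]
      abel
  have hres_norm : ∀ n, ‖res n‖ ≤ M * b ^ n := by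
    intro n
    have := (hinv n).2 (hresKK n)
    simpa [Metric.mem_closedBall, dist_zero_right] using this
  have hres_tendsto : Tendsto res atTop (𝓝 0) := by
    apply squeeze_zero_norm hres_norm
    have : Tendsto (fun n : ℕ => b ^ n) atTop (𝓝 0) :=
      tendsto_pow_atTop_nhds_zero_of_lt_one hb0.le hb1
    simpa using this.const_mul M
  have htendsto : Tendsto (fun n => ∑ i ∈ Finset.range n, dec i) atTop (𝓝 a) := by
    have : (fun n => ∑ i ∈ Finset.range n, dec i) = fun n => a - res n := by
      funext n
      rw [← hpartial n]
      abel
    rw [this]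
    simpa using tendsto_const_nhds.sub hres_tendsto
  have h1 := hsummable.hasSum
  have h2 := h1.tendsto_sum_nat
  have : ∑' n, dec n = a := tendsto_nhds_unique h2 htendsto
  rwa [this] at h1

/-- The bidual factorization operator: given a compact `v₀ : X → X`, there is an operator
`vt : X** → X` whose image of the unit ball is exactly `closure (v₀ '' ball)`. -/
lemma bidual_factor {X : Type*} [NormedAddCommGroup X] [NormedSpace ℝ X] [CompleteSpace X]
    (v₀ : X →L[ℝ] X) (hv₀ : IsCompact (closure (v₀ '' Metric.closedBall 0 1))) :
    ∃ vt : StrongDual ℝ (StrongDual ℝ X) →L[ℝ] X,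
      (∀ z : StrongDual ℝ (StrongDual ℝ X), ‖z‖ ≤ 1 → vt z ∈ closure (v₀ '' Metric.closedBall 0 1)) ∧
      (∀ c ∈ closure (v₀ '' Metric.closedBall 0 1),
        ∃ z : StrongDual ℝ (StrongDual ℝ X), ‖z‖ ≤ 1 ∧ vt z = c) := by
  classical
  set C := closure (v₀ '' Metric.closedBall 0 1) with hCdef
  have hCconv : Convex ℝ C :=
    ((convex_closedBall (0 : X) 1).linear_image v₀.toLinearMap).closure
  have hCsymm : ∀ c ∈ C, -c ∈ C := by
    intro c hc
    have h1 : -c ∈ closure ((fun a => -a) '' (v₀ '' Metric.closedBall 0 1)) := by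
      apply image_closure_subset_closure_image continuous_neg
      exact ⟨c, hc, rfl⟩
    have h2 : (fun a : X => -a) '' (v₀ '' Metric.closedBall 0 1) = v₀ '' Metric.closedBall 0 1 := by
      ext a
      constructor
      · rintro ⟨_, ⟨x, hx, rfl⟩, rfl⟩
        refine ⟨-x, by simpa using hx, by simp⟩
      · rintro ⟨x, hx, rfl⟩
        refine ⟨v₀ (-x), ⟨-x, by simpa using hx, rfl⟩, by simp⟩
    rwa [h2] at h1
  have hC0 : (0 : X) ∈ C :=
    subset_closure ⟨0, Metric.mem_closedBall_self zero_le_one, map_zero v₀⟩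
  -- the adjoint of v₀
  set adjv : StrongDual ℝ X →L[ℝ] StrongDual ℝ X := LinearMap.mkContinuous
    { toFun := fun f => f.comp v₀
      map_add' := fun f g => by ext x; simp
      map_smul' := fun c f => by ext x; simp }
    ‖v₀‖ (fun f => by
      simpa [mul_comm] using ContinuousLinearMap.opNorm_comp_le f v₀) with hadjv
  have hadjv_apply : ∀ f : StrongDual ℝ X, adjv f = f.comp v₀ := fun f => rfl
  have ι_inj : Injective (inclusionInDoubleDual ℝ X) :=
    (inclusionInDoubleDualLi ℝ (E := X)).injective
  have ι_norm : ∀ x : X, ‖inclusionInDoubleDual ℝ X x‖ = ‖x‖ :=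
    fun x => (inclusionInDoubleDualLi ℝ (E := X)).norm_map x
  -- instances for separation on the weak-* dual
  haveI hlcs : LocallyConvexSpace ℝ (WeakDual ℝ (StrongDual ℝ X)) :=
    WeakBilin.locallyConvexSpace (B := topDualPairing ℝ (StrongDual ℝ X))
  -- Claim 1: for ‖z‖ ≤ 1, the composition z ∘ adjv lies in ι '' C
  have claim1 : ∀ z : StrongDual ℝ (StrongDual ℝ X), ‖z‖ ≤ 1 →
      ∃ x ∈ C, inclusionInDoubleDual ℝ X x = z.comp adjv := by
    intro z hz
    by_contra hcon
    push_neg at hcon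
    set j : X → WeakDual ℝ (StrongDual ℝ X) :=
      fun x => StrongDual.toWeakDual (inclusionInDoubleDual ℝ X x) with hj
    set jl : X →ₗ[ℝ] WeakDual ℝ (StrongDual ℝ X) :=
      (StrongDual.toWeakDual.toLinearMap.comp (inclusionInDoubleDual ℝ X).toLinearMap) with hjl
    have hjeq : j = jl := rfl
    set S := j '' C with hS
    have hSconv : Convex ℝ S := by
      rw [hS, hjeq]
      exact hCconv.linear_image jl
    have hjcont : Continuous j :=
      Dual.toWeakDual_continuous.comp (inclusionInDoubleDual ℝ X).continuous
    have hScomp : IsCompact S := hv₀.image hjcont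
    have hSclosed : IsClosed S := hScomp.isClosed
    have hpt : StrongDual.toWeakDual (z.comp adjv) ∉ S := by
      rintro ⟨x, hxC, hx⟩
      exact hcon x hxC (StrongDual.toWeakDual.injective hx)
    obtain ⟨F, u, hFS, hFz⟩ := geometric_hahn_banach_closed_point hSconv hSclosed hpt
    obtain ⟨g, hg⟩ := weakDual_dual_repr F
    have hgc : ∀ c ∈ C, |g c| < u := by
      intro c hc
      have h1 : F (j c) < u := hFS _ ⟨c, hc, rfl⟩
      have h2 : F (j (-c)) < u := hFS _ ⟨-c, hCsymm c hc, rfl⟩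
      rw [hg] at h1 h2
      have e1 : (j c) g = g c := rfl
      have e2 : (j (-c)) g = -(g c) := by
        show (inclusionInDoubleDual ℝ X (-c)) g = -(g c)
        simp
      rw [e1] at h1
      rw [e2] at h2
      rw [abs_lt]
      exact ⟨by linarith, h1⟩
    have hu0 : 0 < u := by
      have := hgc 0 hC0
      simpa using lt_of_le_of_lt (abs_nonneg _) this
    have hnorm : ‖g.comp v₀‖ ≤ u := by
      apply ContinuousLinearMap.opNorm_le_bound _ hu0.le
      intro x
      rcases eq_or_ne x 0 with rfl | hx
      · simp
      · have hxn : ‖x‖ ≠ 0 := norm_ne_zero_iff.mpr hx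
        have hmem : v₀ (‖x‖⁻¹ • x) ∈ C := by
          apply subset_closure
          refine ⟨‖x‖⁻¹ • x, ?_, rfl⟩
          rw [Metric.mem_closedBall, dist_zero_right, norm_smul, norm_inv, norm_norm,
            inv_mul_cancel₀ hxn]
        have hlt := (hgc _ hmem).le
        rw [map_smul, map_smul, smul_eq_mul, abs_mul, abs_inv, abs_norm] at hlt
        have h4 : |g (v₀ x)| ≤ u * ‖x‖ := by
          calc |g (v₀ x)| = ‖x‖ * (‖x‖⁻¹ * |g (v₀ x)|) := by field_simp
            _ ≤ ‖x‖ * u := mul_le_mul_of_nonneg_left hlt (norm_nonneg x)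
            _ = u * ‖x‖ := mul_comm _ _
        simpa [Real.norm_eq_abs] using h4
    have hFz' : u < F (StrongDual.toWeakDual (z.comp adjv)) := hFz
    rw [hg] at hFz'
    have heval : (StrongDual.toWeakDual (z.comp adjv)) g = z (adjv g) := rfl
    rw [heval] at hFz'
    have hle : z (adjv g) ≤ u := by
      have h1 : ‖z (adjv g)‖ ≤ ‖z‖ * ‖adjv g‖ := z.le_opNorm _
      have h2 : ‖adjv g‖ = ‖g.comp v₀‖ := by rw [hadjv_apply]
      have h3 : ‖z‖ * ‖adjv g‖ ≤ 1 * u := by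
        apply mul_le_mul hz (by rw [h2]; exact hnorm) (norm_nonneg _) zero_le_one
      calc z (adjv g) ≤ ‖z (adjv g)‖ := le_abs_self _
        _ ≤ 1 * u := h1.trans h3
        _ = u := one_mul u
    linarith
  -- Claim 2: every point of C is hit by some ‖z‖ ≤ 1
  have claim2 : ∀ c ∈ C, ∃ z : StrongDual ℝ (StrongDual ℝ X), ‖z‖ ≤ 1 ∧
      z.comp adjv = inclusionInDoubleDual ℝ X c := by
    intro c hc
    rw [hCdef, mem_closure_iff_seq_limit] at hc
    obtain ⟨xs, hxs_mem, hxs_lim⟩ := hc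
    have hpre : ∀ m, ∃ p : X, ‖p‖ ≤ 1 ∧ v₀ p = xs m := by
      intro m
      obtain ⟨p, hp, hpv⟩ := hxs_mem m
      exact ⟨p, mem_closedBall_zero_iff.mp hp, hpv⟩
    choose p hp1 hp2 using hpre
    set φ : ℕ → WeakDual ℝ (StrongDual ℝ X) :=
      fun m => StrongDual.toWeakDual (inclusionInDoubleDual ℝ X (p m)) with hφ
    have hScomp := WeakDual.isCompact_closedBall (0 : StrongDual ℝ (StrongDual ℝ X)) 1
    have hφS : ∀ m, φ m ∈ ⇑WeakDual.toStrongDual ⁻¹' Metric.closedBall 0 1 := by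
      intro m
      simp only [Set.mem_preimage, Metric.mem_closedBall, dist_zero_right]
      show ‖inclusionInDoubleDual ℝ X (p m)‖ ≤ 1
      rw [ι_norm]
      exact hp1 m
    set U : Ultrafilter ℕ := Ultrafilter.of atTop with hU
    have hUle : (U : Filter ℕ) ≤ atTop := Ultrafilter.of_le _
    have hmap : (U.map φ : Filter (WeakDual ℝ (StrongDual ℝ X))) ≤ 𝓟 (⇑WeakDual.toStrongDual ⁻¹' Metric.closedBall 0 1) := by
      rw [Filter.le_principal_iff]
      exact Filter.mem_map.mpr (Filter.univ_mem' hφS)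
    obtain ⟨ζ, hζS, hζlim⟩ := hScomp.ultrafilter_le_nhds (U.map φ) hmap
    have hζlim' : Tendsto φ ↑U (𝓝 ζ) := hζlim
    have keval : ∀ g : StrongDual ℝ X, Tendsto (fun m => (φ m) g) ↑U (𝓝 (ζ g)) :=
      fun g => ((WeakDual.eval_continuous g).tendsto ζ).comp hζlim'
    have heq : ∀ f : StrongDual ℝ X, ζ (adjv f) = f c := by
      intro f
      have h1 := keval (adjv f)
      have h2 : Tendsto (fun m => (φ m) (adjv f)) ↑U (𝓝 (f c)) := by
        have he : (fun m => (φ m) (adjv f)) = fun m => f (v₀ (p m)) := rfl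
        rw [he]
        have h3 : Tendsto (fun m => f (v₀ (p m))) atTop (𝓝 (f c)) := by
          have : (fun m => f (v₀ (p m))) = fun m => f (xs m) := by
            funext m; rw [hp2]
          rw [this]
          exact (f.continuous.tendsto c).comp hxs_lim
        exact h3.mono_left hUle
      exact tendsto_nhds_unique h1 h2
    refine ⟨WeakDual.toStrongDual ζ, ?_, ?_⟩
    · have := hζS
      simpa [Set.mem_preimage, Metric.mem_closedBall, dist_zero_right] using this
    · ext f
      show ζ (adjv f) = (inclusionInDoubleDual ℝ X c) f
      rw [heq f]
      rfl
  -- construct vt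
  have hex : ∀ z : StrongDual ℝ (StrongDual ℝ X), ∃ x : X, inclusionInDoubleDual ℝ X x = z.comp adjv := by
    intro z
    rcases eq_or_ne z 0 with rfl | hz
    · exact ⟨0, by ext f; simp⟩
    · have hzn : ‖z‖ ≠ 0 := norm_ne_zero_iff.mpr hz
      have h1 : ‖(‖z‖⁻¹ • z)‖ ≤ 1 := by
        rw [norm_smul, norm_inv, norm_norm, inv_mul_cancel₀ hzn]
      obtain ⟨x, _, hx⟩ := claim1 _ h1
      refine ⟨‖z‖ • x, ?_⟩
      rw [map_smul, hx, ← ContinuousLinearMap.smul_comp, smul_smul,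
        mul_inv_cancel₀ hzn, one_smul]
  choose vtf hvtf using hex
  have hadd : ∀ z₁ z₂, vtf (z₁ + z₂) = vtf z₁ + vtf z₂ := by
    intro z₁ z₂
    apply ι_inj
    rw [map_add, hvtf, hvtf, hvtf, ContinuousLinearMap.add_comp]
  have hsmul : ∀ (c : ℝ) (z : StrongDual ℝ (StrongDual ℝ X)), vtf (c • z) = c • vtf z := by
    intro c z
    apply ι_inj
    rw [map_smul, hvtf, hvtf, ContinuousLinearMap.smul_comp]
  set vtl : StrongDual ℝ (StrongDual ℝ X) →ₗ[ℝ] X :=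
    { toFun := vtf, map_add' := hadd, map_smul' := hsmul } with hvtl
  have hbound : ∀ z, ‖vtl z‖ ≤ ‖v₀‖ * ‖z‖ := by
    intro z
    have h0 : ‖vtf z‖ = ‖inclusionInDoubleDual ℝ X (vtf z)‖ := (ι_norm _).symm
    show ‖vtf z‖ ≤ ‖v₀‖ * ‖z‖
    rw [h0, hvtf]
    have hadjn : ‖adjv‖ ≤ ‖v₀‖ :=
      LinearMap.mkContinuous_norm_le _ (norm_nonneg v₀) _
    calc ‖z.comp adjv‖ ≤ ‖z‖ * ‖adjv‖ := ContinuousLinearMap.opNorm_comp_le _ _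
      _ ≤ ‖z‖ * ‖v₀‖ := mul_le_mul_of_nonneg_left hadjn (norm_nonneg _)
      _ = ‖v₀‖ * ‖z‖ := mul_comm _ _
  refine ⟨LinearMap.mkContinuous vtl ‖v₀‖ hbound, ?_, ?_⟩
  · intro z hz
    obtain ⟨x, hxC, hx⟩ := claim1 z hz
    have : vtf z = x := ι_inj (by rw [hvtf, hx])
    show vtf z ∈ C
    rw [this]; exact hxC
  · intro c hc
    obtain ⟨z, hz1, hz2⟩ := claim2 c hc
    refine ⟨z, hz1, ?_⟩
    show vtf z = c
    exact ι_inj (by rw [hvtf, hz2])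

/-- Proposition 2(a): if `X` has property (𝒦), then every compact operator `u : Y → X`
factors compactly through a quotient `Q` of `X**`. -/
theorem compact_factorization_of_property_K (X : Type u) [NormedAddCommGroup X]
    [NormedSpace ℝ X] [CompleteSpace X] (hX : PropertyK X) :
    ∀ (Y : Type v) [NormedAddCommGroup Y] [NormedSpace ℝ Y] [CompleteSpace Y]
      (u : Y →L[ℝ] X), CompactOp u →
      ∃ (Q : Type u) (_ : NormedAddCommGroup Q) (_ : NormedSpace ℝ Q) (_ : CompleteSpace Q)
        (q : StrongDual ℝ (StrongDual ℝ X) →L[ℝ] Q), Surjective q ∧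
        ∃ (v : Q →L[ℝ] X) (w : Y →L[ℝ] Q),
          CompactOp v ∧ CompactOp w ∧ u = v.comp w := by

  intro Y _ _ _ u hu
  classical
  set K := closure (u '' Metric.closedBall 0 1) with hKdef
  have hK : IsCompact K := hu
  obtain ⟨M₀, hM₀⟩ := hK.isBounded.subset_closedBall 0
  set M : ℝ := max M₀ 1 with hMdef
  have hM : (0:ℝ) < M := lt_of_lt_of_le one_pos (le_max_right _ _)
  have hKM : K ⊆ Metric.closedBall 0 M :=
    hM₀.trans (Metric.closedBall_subset_closedBall (le_max_left _ _))
  -- geometric data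
  have hsqrt2 : (1:ℝ) < Real.sqrt 2 := by
    nlinarith [Real.sq_sqrt (by norm_num : (0:ℝ) ≤ 2), Real.sqrt_nonneg 2]
  set r : ℝ := (Real.sqrt 2)⁻¹ with hrdef
  have hr0 : 0 < r := inv_pos.mpr (lt_trans one_pos hsqrt2)
  have hr1 : r < 1 := inv_lt_one_of_one_lt₀ hsqrt2
  have hb0 : 0 < r * r := mul_pos hr0 hr0
  have hb1 : r * r < 1 := by nlinarith
  obtain ⟨G, hGnorm, hGdec⟩ := compact_decomposition K hK hM hb0 hb1 hKM
  set s : ℕ → ℝ := fun n => Real.sqrt M * r ^ n with hsdef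
  have hs0 : ∀ n, 0 < s n := fun n => mul_pos (Real.sqrt_pos.mpr hM) (pow_pos hr0 n)
  have hssummable : Summable s :=
    (summable_geometric_of_lt_one hr0.le hr1).mul_left _
  have hkey : ∀ n, M * (r * r) ^ n = s n * s n := by
    intro n
    have hM' : Real.sqrt M * Real.sqrt M = M := Real.mul_self_sqrt hM.le
    have he : (Real.sqrt M * r ^ n) * (Real.sqrt M * r ^ n)
        = (Real.sqrt M * Real.sqrt M) * (r ^ n * r ^ n) := by ring
    show M * (r * r) ^ n = (Real.sqrt M * r ^ n) * (Real.sqrt M * r ^ n)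
    rw [he, hM', mul_pow]
  -- the scaled finite sets and the compact set K'
  set SS : ℕ → Set X := fun n => (fun g => (s n)⁻¹ • g) '' (G n : Set X) with hSSdef
  have hSSnorm : ∀ n, ∀ x ∈ SS n, ‖x‖ ≤ s n := by
    rintro n x ⟨g, hg, rfl⟩
    rw [norm_smul, norm_inv, Real.norm_eq_abs, abs_of_pos (hs0 n)]
    have h1 : ‖g‖ ≤ M * (r * r) ^ n := hGnorm n g hg
    rw [hkey n] at h1
    calc (s n)⁻¹ * ‖g‖ ≤ (s n)⁻¹ * (s n * s n) :=
          mul_le_mul_of_nonneg_left h1 (inv_nonneg.mpr (hs0 n).le)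
      _ = s n := by field_simp
  have hstend : Tendsto s atTop (𝓝 0) := by
    have h1 : Tendsto (fun n : ℕ => r ^ n) atTop (𝓝 0) :=
      tendsto_pow_atTop_nhds_zero_of_lt_one hr0.le hr1
    have := h1.const_mul (Real.sqrt M)
    simpa using this
  set K0' : Set X := insert 0 (⋃ n, SS n) with hK0'def
  have htb : TotallyBounded K0' := by
    rw [Metric.totallyBounded_iff]
    intro ε hε
    obtain ⟨N, hN⟩ := (hstend.eventually (gt_mem_nhds hε)).exists
    refine ⟨insert 0 (⋃ n ∈ Finset.range N, SS n), ?_, ?_⟩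
    · apply Set.Finite.insert
      apply Set.Finite.biUnion (Finset.range N).finite_toSet
      intro n _
      exact ((G n).finite_toSet).image _
    · rintro x (rfl | hx)
      · exact Set.mem_biUnion (Set.mem_insert _ _) (mem_ball_self hε)
      · obtain ⟨n, hn⟩ := Set.mem_iUnion.mp hx
        by_cases hnN : n < N
        · refine Set.mem_biUnion ?_ (mem_ball_self hε)
          exact Set.mem_insert_of_mem _
            (Set.mem_biUnion (Finset.mem_range.mpr hnN) hn)
        · push_neg at hnN
          refine Set.mem_biUnion (Set.mem_insert _ _) ?_
          rw [mem_ball, dist_zero_right]  -- wrong orientation? dist x 0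
          calc ‖x‖ ≤ s n := hSSnorm n x hn
            _ ≤ s N := by
                apply mul_le_mul_of_nonneg_left _ (Real.sqrt_nonneg M)
                exact pow_le_pow_of_le_one hr0.le hr1.le hnN
            _ < ε := hN
  have hK'c : IsCompact (closure K0') :=
    isCompact_iff_totallyBounded_isComplete.mpr
      ⟨htb.closure, isClosed_closure.isComplete⟩
  -- apply property K
  obtain ⟨v₀, hv₀c, hKsub⟩ := hX (closure K0') hK'c
  set C := closure (v₀ '' Metric.closedBall 0 1) with hCdef
  have hCcomp : IsCompact C := hv₀c
  have hC0 : (0:X) ∈ C :=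
    subset_closure ⟨0, Metric.mem_closedBall_self zero_le_one, map_zero v₀⟩
  have hSSC : ∀ n, ∀ x ∈ SS n, x ∈ C := fun n x hx =>
    hKsub (subset_closure (Set.mem_insert_of_mem _ (Set.mem_iUnion.mpr ⟨n, hx⟩)))
  -- the bidual operator
  obtain ⟨vt, hvt_ball, hvt_onto⟩ := bidual_factor v₀ hCcomp
  -- the quotient space
  set N : Submodule ℝ (StrongDual ℝ (StrongDual ℝ X)) := LinearMap.ker (vt : StrongDual ℝ (StrongDual ℝ X) →ₗ[ℝ] X) with hNdef
  haveI hNclosed : IsClosed (N : Set (StrongDual ℝ (StrongDual ℝ X))) :=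
    ContinuousLinearMap.isClosed_ker vt
  set qc : StrongDual ℝ (StrongDual ℝ X) →L[ℝ] (StrongDual ℝ (StrongDual ℝ X) ⧸ N) :=
    LinearMap.mkContinuous N.mkQ 1
      (fun m => by simpa [one_mul] using Submodule.Quotient.norm_mk_le N m) with hqcdef
  have hqc_surj : Surjective qc := Submodule.mkQ_surjective N
  -- the induced injective operator on the quotient
  set vbarl : (StrongDual ℝ (StrongDual ℝ X) ⧸ N) →ₗ[ℝ] X :=
    N.liftQ (vt : StrongDual ℝ (StrongDual ℝ X) →ₗ[ℝ] X) (le_refl _) with hvbarldef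
  have hvbarl_mk : ∀ z, vbarl (qc z) = vt z := fun z => rfl
  have hvbarl_bound : ∀ ξ, ‖vbarl ξ‖ ≤ ‖vt‖ * ‖ξ‖ := by
    intro ξ
    apply le_of_forall_pos_le_add
    intro ε hε
    have hε' : (0:ℝ) < ε / (‖vt‖ + 1) := by positivity
    obtain ⟨m, hm, hmn⟩ := Submodule.Quotient.norm_mk_lt ξ hε'
    have h1 : vbarl ξ = vt m := by rw [← hm]; rfl
    rw [h1]
    have h2 : ‖vt m‖ ≤ ‖vt‖ * ‖m‖ := vt.le_opNorm m
    have h3 : ‖vt‖ * ‖m‖ ≤ ‖vt‖ * (‖ξ‖ + ε / (‖vt‖ + 1)) :=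
      mul_le_mul_of_nonneg_left hmn.le (norm_nonneg _)
    have h4 : ‖vt‖ * (ε / (‖vt‖ + 1)) ≤ ε := by
      calc ‖vt‖ * (ε / (‖vt‖ + 1)) ≤ (‖vt‖ + 1) * (ε / (‖vt‖ + 1)) :=
            mul_le_mul_of_nonneg_right (by linarith) (by positivity)
        _ = ε := by field_simp
    nlinarith [norm_nonneg vt]
  set vbar : (StrongDual ℝ (StrongDual ℝ X) ⧸ N) →L[ℝ] X :=
    LinearMap.mkContinuous vbarl ‖vt‖ hvbarl_bound with hvbardef
  have hvbar_mk : ∀ z, vbar (qc z) = vt z := hvbarl_mk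
  have hvbar_inj : Injective vbar := by
    have h := Submodule.ker_liftQ_eq_bot N (vt : StrongDual ℝ (StrongDual ℝ X) →ₗ[ℝ] X)
      (le_refl _) (le_refl _)
    exact LinearMap.ker_eq_bot.mp h
  -- a selection of bidual preimages for points of C
  set ζsel : X → StrongDual ℝ (StrongDual ℝ X) := fun x =>
    if h : ∃ z, ‖z‖ ≤ 1 ∧ vt z = x then h.choose else 0 with hζseldef
  have hζsel : ∀ x ∈ C, ‖ζsel x‖ ≤ 1 ∧ vt (ζsel x) = x := by
    intro x hx
    have h : ∃ z, ‖z‖ ≤ 1 ∧ vt z = x := hvt_onto x hx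
    have heq : ζsel x = h.choose := dif_pos h
    rw [heq]; exact h.choose_spec
  -- the finite subsets of Q
  set D : ℕ → Set (StrongDual ℝ (StrongDual ℝ X) ⧸ N) :=
    fun n => (fun g : X => qc (ζsel ((s n)⁻¹ • g))) '' (G n : Set X) with hDdef
  have hDfin : ∀ n, (D n).Finite := fun n => ((G n).finite_toSet).image _
  have hDnorm : ∀ n, ∀ θ ∈ D n, ‖θ‖ ≤ 1 := by
    rintro n θ ⟨g, hg, rfl⟩
    have hmem : (s n)⁻¹ • g ∈ C := hSSC n _ ⟨g, hg, rfl⟩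
    calc ‖qc (ζsel ((s n)⁻¹ • g))‖ ≤ ‖ζsel ((s n)⁻¹ • g)‖ :=
          Submodule.Quotient.norm_mk_le N _
      _ ≤ 1 := (hζsel _ hmem).1
  -- lifting elements of K
  have hlift : ∀ a ∈ K, ∃ θ : ℕ → (StrongDual ℝ (StrongDual ℝ X) ⧸ N),
      (∀ n, θ n ∈ D n) ∧ Summable (fun n => s n • θ n) ∧
      vbar (∑' n, s n • θ n) = a ∧ ‖∑' n, s n • θ n‖ ≤ ∑' n, s n := by
    intro a ha
    obtain ⟨dec, hdecG, hdec⟩ := hGdec a ha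
    set θ : ℕ → (StrongDual ℝ (StrongDual ℝ X) ⧸ N) :=
      fun n => qc (ζsel ((s n)⁻¹ • dec n)) with hθdef
    have hθD : ∀ n, θ n ∈ D n := fun n => ⟨dec n, hdecG n, rfl⟩
    have hθnorm : ∀ n, ‖s n • θ n‖ ≤ s n := by
      intro n
      rw [norm_smul, Real.norm_eq_abs, abs_of_pos (hs0 n)]
      calc s n * ‖θ n‖ ≤ s n * 1 :=
            mul_le_mul_of_nonneg_left (hDnorm n _ (hθD n)) (hs0 n).le
        _ = s n := mul_one _
    have hsum1 : Summable (fun n => s n • θ n) :=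
      Summable.of_norm_bounded hssummable hθnorm
    refine ⟨θ, hθD, hsum1, ?_, ?_⟩
    · rw [ContinuousLinearMap.map_tsum vbar hsum1]
      have hterm : ∀ n, vbar (s n • θ n) = dec n := by
        intro n
        rw [map_smul]
        have h1 : vbar (θ n) = vt (ζsel ((s n)⁻¹ • dec n)) := hvbar_mk _
        have h2 : vt (ζsel ((s n)⁻¹ • dec n)) = (s n)⁻¹ • dec n :=
          (hζsel _ (hSSC n _ ⟨dec n, hdecG n, rfl⟩)).2
        rw [h1, h2, smul_smul, mul_inv_cancel₀ (hs0 n).ne', one_smul]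
      rw [tsum_congr hterm]
      exact hdec.tsum_eq
    · have hnsum : Summable (fun n => ‖s n • θ n‖) :=
        Summable.of_nonneg_of_le (fun n => norm_nonneg _) hθnorm hssummable
      calc ‖∑' n, s n • θ n‖ ≤ ∑' n, ‖s n • θ n‖ := norm_tsum_le_tsum_norm hnsum
        _ ≤ ∑' n, s n := Summable.tsum_le_tsum hθnorm hnsum hssummable
  -- lifts for all y
  have hexw : ∀ y : Y, ∃ ξ, vbar ξ = u y := by
    intro y
    rcases eq_or_ne y 0 with rfl | hy
    · exact ⟨0, by simp⟩
    · have hyn : ‖y‖ ≠ 0 := norm_ne_zero_iff.mpr hy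
      have hmem : u (‖y‖⁻¹ • y) ∈ K := by
        apply subset_closure
        refine ⟨‖y‖⁻¹ • y, ?_, rfl⟩
        rw [mem_closedBall_zero_iff, norm_smul, norm_inv, norm_norm, inv_mul_cancel₀ hyn]
      obtain ⟨θ, -, -, hθeq, -⟩ := hlift _ hmem
      refine ⟨‖y‖ • ∑' n, s n • θ n, ?_⟩
      rw [map_smul, hθeq, ← map_smul u, smul_smul, mul_inv_cancel₀ hyn, one_smul]
  choose wf hwf using hexw
  have hwadd : ∀ y₁ y₂, wf (y₁ + y₂) = wf y₁ + wf y₂ := fun y₁ y₂ =>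
    hvbar_inj (by rw [hwf, map_add, ← hwf y₁, ← hwf y₂, ← map_add])
  have hwsmul : ∀ (c : ℝ) (y : Y), wf (c • y) = c • wf y := fun c y =>
    hvbar_inj (by rw [hwf, map_smul, ← hwf y, ← map_smul])
  set wlin : Y →ₗ[ℝ] (StrongDual ℝ (StrongDual ℝ X) ⧸ N) :=
    { toFun := wf, map_add' := hwadd, map_smul' := hwsmul } with hwlindef
  set Λ : ℝ := ∑' n, s n with hΛdef
  have hwball : ∀ y : Y, ‖y‖ ≤ 1 → ‖wf y‖ ≤ Λ := by
    intro y hy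
    have hmem : u y ∈ K := subset_closure ⟨y, mem_closedBall_zero_iff.mpr hy, rfl⟩
    obtain ⟨θ, hθD, hθs, hθeq, hθn⟩ := hlift _ hmem
    have heq : wf y = ∑' n, s n • θ n := hvbar_inj (by rw [hwf, hθeq])
    rw [heq]; exact hθn
  have hwbound : ∀ y, ‖wlin y‖ ≤ Λ * ‖y‖ := by
    intro y
    rcases eq_or_ne y 0 with rfl | hy
    · have h0 : wf 0 = 0 := hvbar_inj (by rw [hwf]; simp)
      show ‖wf 0‖ ≤ Λ * ‖(0 : Y)‖
      simp [h0]
    · have hyn : ‖y‖ ≠ 0 := norm_ne_zero_iff.mpr hy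
      have h1 : ‖(‖y‖⁻¹ • y)‖ ≤ 1 := by
        rw [norm_smul, norm_inv, norm_norm, inv_mul_cancel₀ hyn]
      have h2 : wf y = ‖y‖ • wf (‖y‖⁻¹ • y) := by
        rw [← hwsmul, smul_smul, mul_inv_cancel₀ hyn, one_smul]
      show ‖wf y‖ ≤ Λ * ‖y‖
      rw [h2, norm_smul, norm_norm, mul_comm Λ ‖y‖]
      exact mul_le_mul_of_nonneg_left (hwball _ h1) (norm_nonneg y)
  set wc : Y →L[ℝ] (StrongDual ℝ (StrongDual ℝ X) ⧸ N) :=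
    LinearMap.mkContinuous wlin Λ hwbound with hwcdef
  -- compactness of wc
  haveI hDcs : ∀ n, CompactSpace (D n) :=
    fun n => isCompact_iff_compactSpace.mp (hDfin n).isCompact
  set Φ : (∀ n, D n) → (StrongDual ℝ (StrongDual ℝ X) ⧸ N) :=
    fun θ => ∑' n, s n • (θ n : StrongDual ℝ (StrongDual ℝ X) ⧸ N) with hΦdef
  have hΦcont : Continuous Φ := by
    apply continuous_tsum (u := s)
    · intro n
      exact (continuous_subtype_val.comp (continuous_apply n)).const_smul (s n)
    · exact hssummable
    · intro n θ
      rw [norm_smul, Real.norm_eq_abs, abs_of_pos (hs0 n)]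
      calc s n * ‖(θ n : StrongDual ℝ (StrongDual ℝ X) ⧸ N)‖ ≤ s n * 1 :=
            mul_le_mul_of_nonneg_left (hDnorm n _ (θ n).2) (hs0 n).le
        _ = s n := mul_one _
  have hΦcomp : IsCompact (Set.range Φ) := isCompact_range hΦcont
  have hwsub : wc '' Metric.closedBall 0 1 ⊆ Set.range Φ := by
    rintro _ ⟨y, hy, rfl⟩
    have hy1 : ‖y‖ ≤ 1 := mem_closedBall_zero_iff.mp hy
    have hmem : u y ∈ K := subset_closure ⟨y, mem_closedBall_zero_iff.mpr hy1, rfl⟩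
    obtain ⟨θ, hθD, hθs, hθeq, -⟩ := hlift _ hmem
    have heq : wc y = ∑' n, s n • θ n := hvbar_inj (by rw [show vbar (wc y) = u y from hwf y, hθeq])
    exact ⟨fun n => ⟨θ n, hθD n⟩, heq.symm⟩
  have hwcompact : CompactOp wc :=
    hΦcomp.of_isClosed_subset isClosed_closure (closure_minimal hwsub hΦcomp.isClosed)
  -- compactness of vbar
  set C₂ : Set X := (fun p : ℝ × X => p.1 • p.2) '' ((Set.Icc (0:ℝ) 2) ×ˢ C) with hC₂def
  have hC₂comp : IsCompact C₂ := (isCompact_Icc.prod hCcomp).image continuous_smul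
  have hvt2 : ∀ z : StrongDual ℝ (StrongDual ℝ X), ‖z‖ ≤ 2 → vt z ∈ C₂ := by
    intro z hz
    rcases eq_or_ne z 0 with rfl | hz0
    · exact ⟨(0, 0), ⟨⟨le_refl _, by norm_num⟩, hC0⟩, by simp⟩
    · have hzn : ‖z‖ ≠ 0 := norm_ne_zero_iff.mpr hz0
      have h1 : ‖(‖z‖⁻¹ • z)‖ ≤ 1 := by
        rw [norm_smul, norm_inv, norm_norm, inv_mul_cancel₀ hzn]
      refine ⟨(‖z‖, vt (‖z‖⁻¹ • z)), ⟨⟨norm_nonneg _, hz⟩, hvt_ball _ h1⟩, ?_⟩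
      show ‖z‖ • vt (‖z‖⁻¹ • z) = vt z
      rw [← map_smul, smul_smul, mul_inv_cancel₀ hzn, one_smul]
  have hvsub : vbar '' Metric.closedBall 0 1 ⊆ C₂ := by
    rintro _ ⟨ξ, hξ, rfl⟩
    have hξ1 : ‖ξ‖ ≤ 1 := mem_closedBall_zero_iff.mp hξ
    obtain ⟨m, hm, hmn⟩ := Submodule.Quotient.norm_mk_lt ξ one_pos
    have h1 : vbar ξ = vt m := by rw [← hm]; rfl
    have h2 : ‖m‖ ≤ 2 := by linarith
    rw [h1]
    exact hvt2 m h2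
  have hvcompact : CompactOp vbar :=
    hC₂comp.of_isClosed_subset isClosed_closure (closure_minimal hvsub hC₂comp.isClosed)
  refine ⟨StrongDual ℝ (StrongDual ℝ X) ⧸ N, inferInstance, inferInstance, inferInstance, qc, hqc_surj,
    vbar, wc, hvcompact, hwcompact, ?_⟩
  ext y
  exact (hwf y).symm
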